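/- arXiv:2605.05387 — 2 statements merged into one kernel-verified Lean document; each statement's English description precedes it below -/
import Mathlib

section
/- Let 𝒞 ⊂ ℝ^m be countable, let p_S be a probability mass function on 𝒞 with H_{1/2} := 2 log Σ_{c∈𝒞} √(p_S(c)) < ∞. Let σ > 0 and let φ be the density of N(0, σ²I_m). Define for x ∈ ℝ^m the posterior p(c|x) = p_S(c)φ(x−c)/Σ_u p_S(u)φ(x−u), and the posterior-resampling kernel K(c, c*) = ∫_{ℝ^m} p(c|x) φ(x−c*) dx. Then for every r > 0, Σ_{c*∈𝒞} p_S(c*) Σ_{c∈𝒞 : ‖c−c*‖ ≥ r} K(c, c*) ≤ (1/2) exp( H_{1/2} − r²/(8σ²) ). -/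
open MeasureTheory Classical

/-- The density of the Gaussian distribution `N(0, σ² I_m)` on `ℝ^m`
(with `t = σ²` the variance). -/
noncomputable def gaussDensity (m : ℕ) (t : ℝ) (u : EuclideanSpace ℝ (Fin m)) : ℝ :=
  (2 * Real.pi * t) ^ (-(m : ℝ) / 2) * Real.exp (-‖u‖ ^ 2 / (2 * t))

section aux
variable {m : ℕ} {t : ℝ}

lemma gd_pos (ht : 0 < t) (u : EuclideanSpace ℝ (Fin m)) : 0 < gaussDensity m t u := by
  have h2 : (0:ℝ) < 2 * Real.pi * t := by positivity
  exact mul_pos (Real.rpow_pos_of_pos h2 _) (Real.exp_pos _)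

lemma gd_le (ht : 0 < t) (u : EuclideanSpace ℝ (Fin m)) :
    gaussDensity m t u ≤ (2 * Real.pi * t) ^ (-(m : ℝ) / 2) := by
  have h2 : (0:ℝ) < 2 * Real.pi * t := by positivity
  have : Real.exp (-‖u‖ ^ 2 / (2 * t)) ≤ 1 := by
    rw [Real.exp_le_one_iff]
    have h3 : (0:ℝ) ≤ ‖u‖ ^ 2 / (2 * t) := by positivity
    rw [neg_div]; linarith
  calc gaussDensity m t u ≤ (2 * Real.pi * t) ^ (-(m : ℝ) / 2) * 1 :=
        mul_le_mul_of_nonneg_left this (le_of_lt (Real.rpow_pos_of_pos h2 _))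
    _ = _ := mul_one _

lemma integrable_gd (ht : 0 < t) (w : EuclideanSpace ℝ (Fin m)) :
    Integrable (fun x : EuclideanSpace ℝ (Fin m) => gaussDensity m t (x - w)) := by
  have hb : (0:ℝ) < 1 / (2 * t) := by positivity
  have h1 : Integrable (fun v : EuclideanSpace ℝ (Fin m) => Real.exp (-(1/(2*t)) * ‖v‖ ^ 2)) := by
    have := GaussianFourier.integrable_cexp_neg_mul_sq_norm_add (V := EuclideanSpace ℝ (Fin m))
      (b := ((1/(2*t) : ℝ) : ℂ)) (by simpa using hb) 0 0
    have h2 := this.norm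
    refine h2.congr (Filter.Eventually.of_forall fun v => ?_)
    simp [Complex.norm_exp, ← Complex.ofReal_pow]
  have h2 : Integrable (fun v : EuclideanSpace ℝ (Fin m) => gaussDensity m t v) := by
    have := h1.const_mul ((2 * Real.pi * t) ^ (-(m : ℝ) / 2))
    refine this.congr ?_
    filter_upwards with v
    unfold gaussDensity
    ring_nf
  exact h2.comp_sub_right w

lemma integral_gd (ht : 0 < t) (w : EuclideanSpace ℝ (Fin m)) :
    ∫ x : EuclideanSpace ℝ (Fin m), gaussDensity m t (x - w) = 1 := by
  rw [integral_sub_right_eq_self (fun x : EuclideanSpace ℝ (Fin m) => gaussDensity m t x) w]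
  have hb : (0:ℝ) < 1 / (2 * t) := by positivity
  have key : ∫ v : EuclideanSpace ℝ (Fin m), Real.exp (-(1/(2*t)) * ‖v‖ ^ 2)
      = (Real.pi / (1/(2*t))) ^ ((m : ℝ) / 2) := by
    rw [GaussianFourier.integral_rexp_neg_mul_sq_norm hb]
    norm_num [finrank_euclideanSpace_fin]
  have h2 : (0:ℝ) < 2 * Real.pi * t := by positivity
  have heq : ∀ v : EuclideanSpace ℝ (Fin m),
      gaussDensity m t v = (2 * Real.pi * t) ^ (-(m : ℝ) / 2) * Real.exp (-(1/(2*t)) * ‖v‖ ^ 2) := by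
    intro v; unfold gaussDensity; ring_nf
  simp_rw [heq]
  rw [integral_const_mul, key]
  have : Real.pi / (1/(2*t)) = 2 * Real.pi * t := by field_simp
  rw [this, ← Real.rpow_add h2, neg_div, neg_add_cancel, Real.rpow_zero]
end aux

section aux2
variable {m : ℕ} {t : ℝ}

lemma gd_sqrt_mul (ht : 0 < t) (u v : EuclideanSpace ℝ (Fin m)) :
    Real.sqrt (gaussDensity m t u * gaussDensity m t v)
      = gaussDensity m t ((2:ℝ)⁻¹ • (u + v)) * Real.exp (-‖u - v‖ ^ 2 / (8 * t)) := by
  have h2 : (0:ℝ) < 2 * Real.pi * t := by positivity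
  have hR : 0 ≤ gaussDensity m t ((2:ℝ)⁻¹ • (u + v)) * Real.exp (-‖u - v‖ ^ 2 / (8 * t)) :=
    mul_nonneg (le_of_lt (gd_pos ht _)) (le_of_lt (Real.exp_pos _))
  have hkey : gaussDensity m t u * gaussDensity m t v
      = (gaussDensity m t ((2:ℝ)⁻¹ • (u + v)) * Real.exp (-‖u - v‖ ^ 2 / (8 * t))) ^ 2 := by
    unfold gaussDensity
    have hns : ‖(2:ℝ)⁻¹ • (u + v)‖ ^ 2 = (2:ℝ)⁻¹ ^ 2 * ‖u + v‖ ^ 2 := by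
      rw [norm_smul]
      simp [mul_pow]
    have hpar : ‖u + v‖ ^ 2 + ‖u - v‖ ^ 2 = 2 * (‖u‖ ^ 2 + ‖v‖ ^ 2) := by
      have := parallelogram_law_with_norm ℝ u v
      linarith [this]
    have hrpow : ((2 * Real.pi * t) ^ (-(m:ℝ)/2)) * ((2 * Real.pi * t) ^ (-(m:ℝ)/2))
        = ((2 * Real.pi * t) ^ (-(m:ℝ)/2)) ^ 2 := by ring
    have e : ∀ a : ℝ, Real.exp a ^ 2 = Real.exp (2 * a) := fun a => by
      rw [← Real.exp_nat_mul]; norm_num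
    have gen : ∀ C x1 x2 y1 y2 : ℝ, x1 + x2 = y1 + y2 →
        (C * Real.exp x1) * (C * Real.exp x2) = C ^ 2 * Real.exp y1 * Real.exp y2 := by
      intro C x1 x2 y1 y2 h
      rw [mul_mul_mul_comm, ← Real.exp_add, h, Real.exp_add]; ring
    have ht' : t ≠ 0 := ne_of_gt ht
    rw [mul_pow, mul_pow, e, e, hns]
    refine gen _ _ _ _ _ ?_
    field_simp
    linear_combination 8 * hpar
  rw [hkey, Real.sqrt_sq hR]

lemma amgm_div {a b Z : ℝ} (ha : 0 ≤ a) (hb : 0 ≤ b) (hZ : a + b ≤ Z) :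
    a / Z * b ≤ 2⁻¹ * Real.sqrt (a * b) := by
  rcases eq_or_lt_of_le ha with h | ha'
  · simp [← h]
  rcases eq_or_lt_of_le hb with h | hb'
  · simp [← h]
  have hsq : 2 * Real.sqrt (a * b) ≤ a + b := by
    have h1 := two_mul_le_add_sq (Real.sqrt a) (Real.sqrt b)
    rw [Real.sq_sqrt ha, Real.sq_sqrt hb] at h1
    rw [Real.sqrt_mul ha]
    linarith
  have hZ' : (0:ℝ) < Z := lt_of_lt_of_le (by linarith) hZ
  have hs : 0 < Real.sqrt (a * b) := Real.sqrt_pos.mpr (by positivity)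
  rw [div_mul_eq_mul_div, div_le_iff₀ hZ']
  calc a * b = Real.sqrt (a*b) * Real.sqrt (a*b) := (Real.mul_self_sqrt (by positivity)).symm
    _ ≤ 2⁻¹ * Real.sqrt (a*b) * (2 * Real.sqrt (a*b)) := by ring_nf; linarith
    _ ≤ 2⁻¹ * Real.sqrt (a*b) * Z := by
        apply mul_le_mul_of_nonneg_left (le_trans hsq hZ) (by positivity)
end aux2

/-- tail bound for the posterior-resampling kernel: for a countable
codebook `{c i} ⊂ ℝ^m` with pmf `p_S` of finite order-1/2 Rényi entropy `H_{1/2}`,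
posterior `p(c|x)` of the Gaussian channel with noise `N(0, σ² I_m)` and resampling
kernel `K(c, c*) = ∫ p(c|x) φ(x−c*) dx`, for every `r > 0`,
`Σ_{c*} p_S(c*) Σ_{c : ‖c−c*‖ ≥ r} K(c, c*) ≤ (1/2) exp(H_{1/2} − r²/(8σ²))`. -/
theorem stmt12 (m : ℕ) {ι : Type*} [Countable ι]
    (c : ι → EuclideanSpace ℝ (Fin m)) (hc : Function.Injective c)
    (pS : ι → ℝ) (hpS0 : ∀ i, 0 ≤ pS i) (hpS1 : ∑' i, pS i = 1)
    (hsqrt : Summable fun i => Real.sqrt (pS i))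
    (Hhalf : ℝ) (hHhalf : Hhalf = 2 * Real.log (∑' i, Real.sqrt (pS i)))
    (σ : ℝ) (hσ : 0 < σ)
    (post : ι → EuclideanSpace ℝ (Fin m) → ℝ)
    (hpost : post = fun i x => pS i * gaussDensity m (σ ^ 2) (x - c i)
        / ∑' u, pS u * gaussDensity m (σ ^ 2) (x - c u))
    (K : ι → ι → ℝ)
    (hK : K = fun i istar =>
        ∫ x : EuclideanSpace ℝ (Fin m), post i x * gaussDensity m (σ ^ 2) (x - c istar)) :
    ∀ r : ℝ, 0 < r →
      (∑' istar, pS istar * ∑' i, (if r ≤ ‖c i - c istar‖ then K i istar else 0))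
        ≤ (1 / 2) * Real.exp (Hhalf - r ^ 2 / (8 * σ ^ 2)) := by
  intro r hr
  set t := σ ^ 2 with hts
  have ht : 0 < t := by positivity
  have hpSsum : Summable pS := by
    by_contra h
    rw [tsum_eq_zero_of_not_summable h] at hpS1
    norm_num at hpS1
  have hZsum : ∀ x : EuclideanSpace ℝ (Fin m),
      Summable (fun u => pS u * gaussDensity m t (x - c u)) := by
    intro x
    refine Summable.of_nonneg_of_le (fun u => mul_nonneg (hpS0 u) (gd_pos ht _).le)
      (fun u => mul_le_mul_of_nonneg_left (gd_le ht _) (hpS0 u))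
      (hpSsum.mul_right ((2 * Real.pi * t) ^ (-(m:ℝ)/2)))
  have hpostnn : ∀ i x, 0 ≤ post i x := by
    intro i x
    simp only [hpost]
    exact div_nonneg (mul_nonneg (hpS0 i) (gd_pos ht _).le)
      (tsum_nonneg fun u => mul_nonneg (hpS0 u) (gd_pos ht _).le)
  have hKnn : ∀ i j, 0 ≤ K i j := by
    intro i j
    simp only [hK]
    exact integral_nonneg fun x => mul_nonneg (hpostnn i x) (gd_pos ht _).le
  set S := ∑' i, Real.sqrt (pS i) with hS
  have hSpos : 0 < S := by
    obtain ⟨i, hi⟩ : ∃ i, pS i ≠ 0 := by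
      by_contra h
      push_neg at h
      simp only [h, tsum_zero] at hpS1
      norm_num at hpS1
    exact lt_of_lt_of_le (Real.sqrt_pos.mpr ((hpS0 i).lt_of_ne (Ne.symm hi)))
      (Summable.le_tsum hsqrt i fun j _ => Real.sqrt_nonneg _)
  set Er := Real.exp (-r ^ 2 / (8 * t)) with hEr
  -- key per-pair bound
  have hkey : ∀ i j, i ≠ j → pS j * K i j
      ≤ 2⁻¹ * (Real.sqrt (pS i) * Real.sqrt (pS j))
          * Real.exp (-‖c i - c j‖ ^ 2 / (8 * t)) := by
    intro i j hij
    set mid := (2:ℝ)⁻¹ • (c i + c j) with hmid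
    set D := Real.exp (-‖c i - c j‖ ^ 2 / (8 * t)) with hD
    have hDeq : ∀ x : EuclideanSpace ℝ (Fin m),
        Real.sqrt (gaussDensity m t (x - c i) * gaussDensity m t (x - c j))
          = gaussDensity m t (x - mid) * D := by
      intro x
      have h1 := gd_sqrt_mul ht (x - c i) (x - c j)
      have h2 : (2:ℝ)⁻¹ • ((x - c i) + (x - c j)) = x - mid := by
        rw [hmid]; module
      have h3 : (x - c i) - (x - c j) = c j - c i := by abel
      rw [h1, h2, h3, norm_sub_rev (c j) (c i)]
    have hpt : ∀ x : EuclideanSpace ℝ (Fin m),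
        pS j * (post i x * gaussDensity m t (x - c j))
          ≤ (2⁻¹ * (Real.sqrt (pS i) * Real.sqrt (pS j)) * D) * gaussDensity m t (x - mid) := by
      intro x
      have ha : 0 ≤ pS i * gaussDensity m t (x - c i) := mul_nonneg (hpS0 i) (gd_pos ht _).le
      have hb : 0 ≤ pS j * gaussDensity m t (x - c j) := mul_nonneg (hpS0 j) (gd_pos ht _).le
      have hZ : (pS i * gaussDensity m t (x - c i)) + (pS j * gaussDensity m t (x - c j))
          ≤ ∑' u, pS u * gaussDensity m t (x - c u) := by
        have h4 := Summable.sum_le_tsum ({i, j} : Finset ι)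
          (fun u _ => mul_nonneg (hpS0 u) (gd_pos ht _).le) (hZsum x)
        rwa [Finset.sum_pair hij] at h4
      have h1 := amgm_div ha hb hZ
      have heq : pS j * (post i x * gaussDensity m t (x - c j))
          = (pS i * gaussDensity m t (x - c i)) / (∑' u, pS u * gaussDensity m t (x - c u))
              * (pS j * gaussDensity m t (x - c j)) := by
        simp only [hpost]; ring
      rw [heq]
      refine h1.trans (le_of_eq ?_)
      have h5 : Real.sqrt ((pS i * gaussDensity m t (x - c i))
            * (pS j * gaussDensity m t (x - c j)))
          = (Real.sqrt (pS i) * Real.sqrt (pS j)) * (gaussDensity m t (x - mid) * D) := by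
        rw [show (pS i * gaussDensity m t (x - c i)) * (pS j * gaussDensity m t (x - c j))
            = (pS i * pS j) * (gaussDensity m t (x - c i) * gaussDensity m t (x - c j)) by ring,
          Real.sqrt_mul (mul_nonneg (hpS0 i) (hpS0 j)), hDeq x, Real.sqrt_mul (hpS0 i)]
      rw [h5]; ring
    calc pS j * K i j
        = ∫ x : EuclideanSpace ℝ (Fin m),
            pS j * (post i x * gaussDensity m t (x - c j)) := by
          simp only [hK]
          exact (integral_const_mul _ _).symm
      _ ≤ ∫ x : EuclideanSpace ℝ (Fin m),
            (2⁻¹ * (Real.sqrt (pS i) * Real.sqrt (pS j)) * D) * gaussDensity m t (x - mid) := by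
          refine integral_mono_of_nonneg (ae_of_all _ fun x =>
              mul_nonneg (hpS0 j) (mul_nonneg (hpostnn i x) (gd_pos ht _).le))
            ((integrable_gd ht mid).const_mul _) (ae_of_all _ hpt)
      _ = 2⁻¹ * (Real.sqrt (pS i) * Real.sqrt (pS j)) * D := by
          rw [integral_const_mul, integral_gd ht, mul_one]
  -- inner sums
  have hterm : ∀ j i, pS j * (if r ≤ ‖c i - c j‖ then K i j else 0)
      ≤ (2⁻¹ * Real.sqrt (pS j) * Er) * Real.sqrt (pS i) := by
    intro j i
    by_cases hd : r ≤ ‖c i - c j‖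
    · simp only [if_pos hd]
      have hij : i ≠ j := by
        intro h
        subst h
        simp only [sub_self, norm_zero] at hd
        linarith
      have h2 : Real.exp (-‖c i - c j‖ ^ 2 / (8 * t)) ≤ Er := by
        rw [hEr]
        apply Real.exp_le_exp.mpr
        have h3 : r ^ 2 ≤ ‖c i - c j‖ ^ 2 := by nlinarith [hr.le, norm_nonneg (c i - c j)]
        have h8t : (0:ℝ) < 8 * t := by positivity
        rw [div_le_div_iff₀ h8t h8t]
        nlinarith
      calc pS j * K i j
          ≤ 2⁻¹ * (Real.sqrt (pS i) * Real.sqrt (pS j))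
              * Real.exp (-‖c i - c j‖ ^ 2 / (8 * t)) := hkey i j hij
        _ ≤ 2⁻¹ * (Real.sqrt (pS i) * Real.sqrt (pS j)) * Er := by
            apply mul_le_mul_of_nonneg_left h2 (by positivity)
        _ = (2⁻¹ * Real.sqrt (pS j) * Er) * Real.sqrt (pS i) := by ring
    · simp only [if_neg hd, mul_zero]
      positivity
  have hitenn : ∀ j i, 0 ≤ pS j * (if r ≤ ‖c i - c j‖ then K i j else 0) := by
    intro j i
    refine mul_nonneg (hpS0 j) ?_
    split
    · exact hKnn i j
    · exact le_refl 0
  have hinner : ∀ j, pS j * ∑' i, (if r ≤ ‖c i - c j‖ then K i j else 0)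
      ≤ (2⁻¹ * Er * S) * Real.sqrt (pS j) := by
    intro j
    have hmaj : Summable (fun i => (2⁻¹ * Real.sqrt (pS j) * Er) * Real.sqrt (pS i)) :=
      hsqrt.mul_left _
    have hfsum : Summable (fun i => pS j * (if r ≤ ‖c i - c j‖ then K i j else 0)) :=
      Summable.of_nonneg_of_le (hitenn j) (hterm j) hmaj
    calc pS j * ∑' i, (if r ≤ ‖c i - c j‖ then K i j else 0)
        = ∑' i, pS j * (if r ≤ ‖c i - c j‖ then K i j else 0) := tsum_mul_left.symm
      _ ≤ ∑' i, (2⁻¹ * Real.sqrt (pS j) * Er) * Real.sqrt (pS i) :=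
          Summable.tsum_le_tsum (hterm j) hfsum hmaj
      _ = (2⁻¹ * Real.sqrt (pS j) * Er) * S := tsum_mul_left
      _ = (2⁻¹ * Er * S) * Real.sqrt (pS j) := by ring
  -- outer sum
  have houternn : ∀ j, 0 ≤ pS j * ∑' i, (if r ≤ ‖c i - c j‖ then K i j else 0) := by
    intro j
    refine mul_nonneg (hpS0 j) (tsum_nonneg fun i => ?_)
    split
    · exact hKnn i j
    · exact le_refl 0
  have hmaj2 : Summable (fun j => (2⁻¹ * Er * S) * Real.sqrt (pS j)) := hsqrt.mul_left _
  have hLsum : Summable (fun j => pS j * ∑' i, (if r ≤ ‖c i - c j‖ then K i j else 0)) :=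
    Summable.of_nonneg_of_le houternn hinner hmaj2
  calc (∑' j, pS j * ∑' i, (if r ≤ ‖c i - c j‖ then K i j else 0))
      ≤ ∑' j, (2⁻¹ * Er * S) * Real.sqrt (pS j) := Summable.tsum_le_tsum hinner hLsum hmaj2
    _ = (2⁻¹ * Er * S) * S := tsum_mul_left
    _ = (1 / 2) * Real.exp (Hhalf - r ^ 2 / (8 * t)) := by
        rw [hHhalf, sub_eq_add_neg, Real.exp_add, ← neg_div,
          show (2:ℝ) * Real.log S = Real.log S + Real.log S by ring, Real.exp_add,
          Real.exp_log hSpos, ← hEr]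
        ring
end

section
/- Let 𝒞 ⊂ ℝ^m be countable, let p_S be a probability mass function on 𝒞, let σ > 0, and let φ be the density of N(0, σ²I_m). Define the posterior p(c|x) = p_S(c)φ(x−c)/Σ_u p_S(u)φ(x−u) and the kernel K(c, c*) = ∫_{ℝ^m} p(c|x) φ(x−c*) dx. Then for all distinct c, c* ∈ 𝒞 with p_S(c*) > 0, K(c, c*) ≤ (1/2) √(p_S(c)/p_S(c*)) · exp( −‖c−c*‖²/(8σ²) ). -/
open MeasureTheory

lemma gaussDensity_pos (m : ℕ) {t : ℝ} (ht : 0 < t) (u : EuclideanSpace ℝ (Fin m)) :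
    0 < gaussDensity m t u := by
  unfold gaussDensity
  have : (0:ℝ) < 2 * Real.pi * t := by positivity
  positivity

lemma gaussDensity_le (m : ℕ) {t : ℝ} (ht : 0 < t) (u : EuclideanSpace ℝ (Fin m)) :
    gaussDensity m t u ≤ (2 * Real.pi * t) ^ (-(m : ℝ) / 2) := by
  unfold gaussDensity
  have h1 : Real.exp (-‖u‖ ^ 2 / (2 * t)) ≤ 1 := by
    rw [Real.exp_le_one_iff]
    have : (0:ℝ) ≤ ‖u‖ ^ 2 := by positivity
    have : (0:ℝ) < 2 * t := by positivity
    exact div_nonpos_of_nonpos_of_nonneg (by linarith) (by linarith)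
  have h2 : (0:ℝ) < (2 * Real.pi * t) ^ (-(m : ℝ) / 2) := by
    have : (0:ℝ) < 2 * Real.pi * t := by positivity
    positivity
  nlinarith

lemma gaussDensity_integrable (m : ℕ) {t : ℝ} (ht : 0 < t) :
    Integrable (gaussDensity m t) := by
  have hb : (0:ℝ) < 1 / (2 * t) := by positivity
  have h := (GaussianFourier.integrable_cexp_neg_mul_sq_norm_add
    (V := EuclideanSpace ℝ (Fin m)) (b := ((1 / (2 * t) : ℝ) : ℂ)) (by simpa using hb) 0 0).norm
  unfold gaussDensity
  apply Integrable.const_mul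
  convert h using 2 with v
  rw [Complex.norm_exp]
  congr 1
  simp only [neg_mul, mul_zero, zero_mul, add_zero, Complex.neg_re, Complex.mul_re,
    Complex.ofReal_re, Complex.ofReal_im, ← Complex.ofReal_pow]
  field_simp
  ring

lemma gaussDensity_integral (m : ℕ) {t : ℝ} (ht : 0 < t) :
    ∫ u : EuclideanSpace ℝ (Fin m), gaussDensity m t u = 1 := by
  have hb : (0:ℝ) < 1 / (2 * t) := by positivity
  have key : ∀ u : EuclideanSpace ℝ (Fin m),
      Real.exp (-‖u‖ ^ 2 / (2 * t)) = Real.exp (-(1 / (2 * t)) * ‖u‖ ^ 2) := by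
    intro u; congr 1; ring
  unfold gaussDensity
  simp_rw [key]
  rw [integral_const_mul, GaussianFourier.integral_rexp_neg_mul_sq_norm hb,
    finrank_euclideanSpace_fin]
  have h1 : Real.pi / (1 / (2 * t)) = 2 * Real.pi * t := by field_simp
  rw [h1, ← Real.rpow_add (by positivity), show -(m:ℝ) / 2 + (m:ℝ) / 2 = 0 by ring,
    Real.rpow_zero]

lemma sqrt_gaussDensity_mul (m : ℕ) {t : ℝ} (ht : 0 < t)
    (a b x : EuclideanSpace ℝ (Fin m)) :
    Real.sqrt (gaussDensity m t (x - a)) * Real.sqrt (gaussDensity m t (x - b)) =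
      Real.exp (-‖a - b‖ ^ 2 / (8 * t)) *
        gaussDensity m t (x - (2:ℝ)⁻¹ • (a + b)) := by
  have hP : (0:ℝ) < (2 * Real.pi * t) ^ (-(m : ℝ) / 2) := by
    have : (0:ℝ) < 2 * Real.pi * t := by positivity
    positivity
  have hpar : ‖x - a‖ ^ 2 + ‖x - b‖ ^ 2
      = 2 * ‖x - (2:ℝ)⁻¹ • (a + b)‖ ^ 2 + ‖a - b‖ ^ 2 / 2 := by
    have h := parallelogram_law_with_norm ℝ (x - a) (x - b)
    have h1 : (x - a) + (x - b) = (2:ℝ) • (x - (2:ℝ)⁻¹ • (a + b)) := by module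
    have h2 : (x - a) - (x - b) = b - a := by abel
    rw [h1, h2, norm_smul, norm_sub_rev b a] at h
    simp only [Real.norm_ofNat] at h
    have e1 : ‖x - (2:ℝ)⁻¹ • (a + b)‖ ^ 2 = ‖x - (2:ℝ)⁻¹ • (a + b)‖ * ‖x - (2:ℝ)⁻¹ • (a + b)‖ := sq _
    have e2 : ‖a - b‖ ^ 2 = ‖a - b‖ * ‖a - b‖ := sq _
    have e3 : ‖x - a‖ ^ 2 = ‖x - a‖ * ‖x - a‖ := sq _
    have e4 : ‖x - b‖ ^ 2 = ‖x - b‖ * ‖x - b‖ := sq _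
    nlinarith [h, e1, e2, e3, e4]
  unfold gaussDensity
  rw [Real.sqrt_mul hP.le, Real.sqrt_mul hP.le, ← Real.exp_half, ← Real.exp_half]
  have hPP : Real.sqrt ((2 * Real.pi * t) ^ (-(m : ℝ) / 2))
      * Real.sqrt ((2 * Real.pi * t) ^ (-(m : ℝ) / 2)) = (2 * Real.pi * t) ^ (-(m : ℝ) / 2) :=
    Real.mul_self_sqrt hP.le
  calc Real.sqrt ((2 * Real.pi * t) ^ (-(m : ℝ) / 2)) * Real.exp (-‖x - a‖ ^ 2 / (2 * t) / 2) *
        (Real.sqrt ((2 * Real.pi * t) ^ (-(m : ℝ) / 2)) * Real.exp (-‖x - b‖ ^ 2 / (2 * t) / 2))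
      = (2 * Real.pi * t) ^ (-(m : ℝ) / 2)
          * Real.exp (-‖x - a‖ ^ 2 / (2 * t) / 2 + -‖x - b‖ ^ 2 / (2 * t) / 2) := by
        rw [Real.exp_add]
        linear_combination (Real.exp (-‖x - a‖ ^ 2 / (2 * t) / 2)
          * Real.exp (-‖x - b‖ ^ 2 / (2 * t) / 2)) * hPP
    _ = Real.exp (-‖a - b‖ ^ 2 / (8 * t)) * ((2 * Real.pi * t) ^ (-(m : ℝ) / 2)
          * Real.exp (-‖x - (2:ℝ)⁻¹ • (a + b)‖ ^ 2 / (2 * t))) := by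
        have harg : -‖x - a‖ ^ 2 / (2 * t) / 2 + -‖x - b‖ ^ 2 / (2 * t) / 2
            = -‖a - b‖ ^ 2 / (8 * t) + -‖x - (2:ℝ)⁻¹ • (a + b)‖ ^ 2 / (2 * t) := by
          linear_combination (-1 / (4 * t)) * hpar
        rw [harg, Real.exp_add]; ring

lemma step2_alg (p q φ1 φ2 g E : ℝ) (hp : 0 < p) (hq : 0 < q) (h1 : 0 < φ1) (h2 : 0 < φ2)
    (hgeo : Real.sqrt φ1 * Real.sqrt φ2 = E * g) :
    p * φ1 * φ2 / (2 * (Real.sqrt (p * φ1) * Real.sqrt (q * φ2)))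
      = 1 / 2 * Real.sqrt (p / q) * E * g := by
  obtain ⟨a, ha, rfl⟩ : ∃ a, 0 < a ∧ p = a ^ 2 :=
    ⟨Real.sqrt p, Real.sqrt_pos.mpr hp, (Real.sq_sqrt hp.le).symm⟩
  obtain ⟨e, he, rfl⟩ : ∃ e, 0 < e ∧ q = e ^ 2 :=
    ⟨Real.sqrt q, Real.sqrt_pos.mpr hq, (Real.sq_sqrt hq.le).symm⟩
  obtain ⟨b, hb, rfl⟩ : ∃ b, 0 < b ∧ φ1 = b ^ 2 :=
    ⟨Real.sqrt φ1, Real.sqrt_pos.mpr h1, (Real.sq_sqrt h1.le).symm⟩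
  obtain ⟨f, hf, rfl⟩ : ∃ f, 0 < f ∧ φ2 = f ^ 2 :=
    ⟨Real.sqrt φ2, Real.sqrt_pos.mpr h2, (Real.sq_sqrt h2.le).symm⟩
  rw [Real.sqrt_sq hb.le, Real.sqrt_sq hf.le] at hgeo
  rw [Real.sqrt_mul (sq_nonneg a), Real.sqrt_mul (sq_nonneg e),
    Real.sqrt_div (sq_nonneg a), Real.sqrt_sq ha.le, Real.sqrt_sq he.le,
    Real.sqrt_sq hb.le, Real.sqrt_sq hf.le, mul_assoc (1 / 2 * (a / e)) E g, ← hgeo]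
  field_simp

/-- pointwise kernel bound: for a countable codebook `{c i} ⊂ ℝ^m`
with pmf `p_S`, posterior `p(c|x)` of the Gaussian channel with noise `N(0, σ² I_m)`
and resampling kernel `K(c, c*) = ∫ p(c|x) φ(x−c*) dx`, for all distinct `c, c*`
with `p_S(c*) > 0`,
`K(c, c*) ≤ (1/2) √(p_S(c)/p_S(c*)) exp(−‖c−c*‖²/(8σ²))`. -/
theorem stmt13 (m : ℕ) {ι : Type*} [Countable ι]
    (c : ι → EuclideanSpace ℝ (Fin m)) (hc : Function.Injective c)
    (pS : ι → ℝ) (hpS0 : ∀ i, 0 ≤ pS i) (hpS1 : ∑' i, pS i = 1)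
    (σ : ℝ) (hσ : 0 < σ)
    (post : ι → EuclideanSpace ℝ (Fin m) → ℝ)
    (hpost : post = fun i x => pS i * gaussDensity m (σ ^ 2) (x - c i)
        / ∑' u, pS u * gaussDensity m (σ ^ 2) (x - c u))
    (K : ι → ι → ℝ)
    (hK : K = fun i istar =>
        ∫ x : EuclideanSpace ℝ (Fin m), post i x * gaussDensity m (σ ^ 2) (x - c istar)) :
    ∀ i istar : ι, i ≠ istar → 0 < pS istar →
      K i istar ≤ (1 / 2) * Real.sqrt (pS i / pS istar)
        * Real.exp (-‖c i - c istar‖ ^ 2 / (8 * σ ^ 2)) := by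

  classical
  intro i istar hne hst
  subst hpost hK
  have ht : (0:ℝ) < σ ^ 2 := by positivity
  set t := σ ^ 2 with htdef
  set mid : EuclideanSpace ℝ (Fin m) := (2:ℝ)⁻¹ • (c i + c istar) with hmid
  set C : ℝ := 1 / 2 * Real.sqrt (pS i / pS istar)
    * Real.exp (-‖c i - c istar‖ ^ 2 / (8 * t)) with hC
  have hCnn : 0 ≤ C := by positivity
  have hS : Summable pS := by
    by_contra h
    rw [tsum_eq_zero_of_not_summable h] at hpS1
    norm_num at hpS1
  have key : ∀ x : EuclideanSpace ℝ (Fin m),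
      pS i * gaussDensity m t (x - c i) / (∑' u, pS u * gaussDensity m t (x - c u))
        * gaussDensity m t (x - c istar) ≤ C * gaussDensity m t (x - mid) := by
    intro x
    have hφi := gaussDensity_pos m ht (x - c i)
    have hφs := gaussDensity_pos m ht (x - c istar)
    have hφm := gaussDensity_pos m ht (x - mid)
    have hsumm : Summable fun u => pS u * gaussDensity m t (x - c u) := by
      apply Summable.of_nonneg_of_le
        (fun u => mul_nonneg (hpS0 u) (gaussDensity_pos m ht _).le)
        (fun u => mul_le_mul_of_nonneg_left (gaussDensity_le m ht _) (hpS0 u))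
        (hS.mul_right _)
    set D := ∑' u, pS u * gaussDensity m t (x - c u) with hD
    have htwo : pS i * gaussDensity m t (x - c i)
        + pS istar * gaussDensity m t (x - c istar) ≤ D := by
      have h := Summable.sum_le_tsum ({i, istar} : Finset ι)
        (fun u _ => mul_nonneg (hpS0 u) (gaussDensity_pos m ht _).le) hsumm
      rwa [Finset.sum_pair hne] at h
    have hBpos : 0 < pS istar * gaussDensity m t (x - c istar) := mul_pos hst hφs
    have hAnn : 0 ≤ pS i * gaussDensity m t (x - c i) := mul_nonneg (hpS0 i) hφi.le
    have hDpos : 0 < D := lt_of_lt_of_le (by linarith) htwo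
    rcases eq_or_lt_of_le (hpS0 i) with h0 | hpi
    · rw [← h0]
      simpa using mul_nonneg hCnn hφm.le
    · have hAM : 2 * (Real.sqrt (pS i * gaussDensity m t (x - c i))
          * Real.sqrt (pS istar * gaussDensity m t (x - c istar))) ≤ D := by
        have h2ab := two_mul_le_add_sq (Real.sqrt (pS i * gaussDensity m t (x - c i)))
          (Real.sqrt (pS istar * gaussDensity m t (x - c istar)))
        rw [Real.sq_sqrt hAnn, Real.sq_sqrt hBpos.le] at h2ab
        calc 2 * (Real.sqrt (pS i * gaussDensity m t (x - c i))
              * Real.sqrt (pS istar * gaussDensity m t (x - c istar)))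
            = 2 * Real.sqrt (pS i * gaussDensity m t (x - c i))
              * Real.sqrt (pS istar * gaussDensity m t (x - c istar)) := by ring
          _ ≤ _ := le_trans h2ab htwo
      have hApos : 0 < pS i * gaussDensity m t (x - c i) := mul_pos hpi hφi
      have hEpos : 0 < 2 * (Real.sqrt (pS i * gaussDensity m t (x - c i))
          * Real.sqrt (pS istar * gaussDensity m t (x - c istar))) := by
        have := Real.sqrt_pos.mpr hApos
        have := Real.sqrt_pos.mpr hBpos
        positivity
      have step1 : pS i * gaussDensity m t (x - c i) / D * gaussDensity m t (x - c istar)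
          ≤ pS i * gaussDensity m t (x - c i) * gaussDensity m t (x - c istar)
            / (2 * (Real.sqrt (pS i * gaussDensity m t (x - c i))
              * Real.sqrt (pS istar * gaussDensity m t (x - c istar)))) := by
        rw [div_mul_eq_mul_div, div_le_div_iff₀ hDpos hEpos]
        nlinarith [mul_pos hApos hφs]
      have step2 : pS i * gaussDensity m t (x - c i) * gaussDensity m t (x - c istar)
            / (2 * (Real.sqrt (pS i * gaussDensity m t (x - c i))
              * Real.sqrt (pS istar * gaussDensity m t (x - c istar))))
          = C * gaussDensity m t (x - mid) := by
        have hgeo := sqrt_gaussDensity_mul m ht (c i) (c istar) x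
        rw [← hmid] at hgeo
        rw [hC]
        exact step2_alg _ _ _ _ _ _ hpi hst hφi hφs hgeo
      exact step1.trans_eq step2
  have hgint : Integrable (fun x : EuclideanSpace ℝ (Fin m)
      => C * gaussDensity m t (x - mid)) :=
    ((gaussDensity_integrable m ht).comp_sub_right mid).const_mul C
  have hnn : ∀ x : EuclideanSpace ℝ (Fin m),
      0 ≤ pS i * gaussDensity m t (x - c i) / (∑' u, pS u * gaussDensity m t (x - c u))
        * gaussDensity m t (x - c istar) := fun x =>
    mul_nonneg (div_nonneg (mul_nonneg (hpS0 i) (gaussDensity_pos m ht _).le)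
      (tsum_nonneg fun u => mul_nonneg (hpS0 u) (gaussDensity_pos m ht _).le))
      (gaussDensity_pos m ht _).le
  have hmono := integral_mono_of_nonneg (μ := volume)
    (Filter.Eventually.of_forall hnn) hgint (Filter.Eventually.of_forall key)
  calc (fun i istar => ∫ x : EuclideanSpace ℝ (Fin m),
        (fun i x => pS i * gaussDensity m t (x - c i)
          / ∑' u, pS u * gaussDensity m t (x - c u)) i x
          * gaussDensity m t (x - c istar)) i istar
      ≤ ∫ x : EuclideanSpace ℝ (Fin m), C * gaussDensity m t (x - mid) := hmono
    _ = C := by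
        rw [integral_const_mul, integral_sub_right_eq_self (gaussDensity m t) mid,
          gaussDensity_integral m ht, mul_one]
    _ = _ := by rw [hC]
end
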